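/- Let k ≥ 0 be a real number and define g : ℝ → ℝ by g(x) = sign(x)·|x|^k, where sign(x) = 1 for x > 0, sign(0) = 0, and sign(x) = −1 for x < 0. Let f : ℝ → ℝ. Then the inequality f(x)·g(x−y)·g(x−z) + f(y)·g(y−z)·g(y−x) + f(z)·g(z−x)·g(z−y) ≥ 0 holds for all real numbers x ≥ y ≥ z if and only if f(λx + (1−λ)z) ≤ f(x)/λ^k + f(z)/(1−λ)^k for all λ ∈ (0,1) and all real x ≠ z. -/

import Mathlib

/-- The function `x ↦ sign x * |x| ^ k` where `sign` is the sign function and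
`|x| ^ k` is the real power. -/
noncomputable def signPow (k : ℝ) : ℝ → ℝ := fun x => Real.sign x * |x| ^ k

lemma signPow_of_pos (k x : ℝ) (hx : 0 < x) : signPow k x = x ^ k := by
  simp [signPow, Real.sign_of_pos hx, abs_of_pos hx]

lemma signPow_of_neg (k x : ℝ) (hx : x < 0) : signPow k x = -((-x) ^ k) := by
  simp [signPow, Real.sign_of_neg hx, abs_of_neg hx]

lemma signPow_zero' (k : ℝ) : signPow k 0 = 0 := by simp [signPow]

lemma strict_iff (k A B C a b : ℝ) (ha : 0 < a) (hb : 0 < b) :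
    (0 ≤ A * b^k * (a+b)^k - B * (a^k * b^k) + C * ((a+b)^k * a^k)) ↔
    B ≤ A * ((a+b)^k / a^k) + C * ((a+b)^k / b^k) := by
  have h1 : 0 < a^k := Real.rpow_pos_of_pos ha k
  have h2 : 0 < b^k := Real.rpow_pos_of_pos hb k
  have h3 : 0 < (a+b)^k := Real.rpow_pos_of_pos (by linarith) k
  rw [show A * ((a+b)^k / a^k) + C * ((a+b)^k / b^k)
      = (A * b^k * (a+b)^k + C * ((a+b)^k * a^k)) / (a^k * b^k) by
        field_simp,
    le_div_iff₀ (mul_pos h1 h2)]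
  constructor <;> intro h <;> nlinarith

lemma bridge (k : ℝ) (f : ℝ → ℝ) (x y z : ℝ) (hzy : z < y) (hyx : y < x) :
    (0 ≤ f x * signPow k (x - y) * signPow k (x - z)
        + f y * signPow k (y - z) * signPow k (y - x)
        + f z * signPow k (z - x) * signPow k (z - y)) ↔
    f y ≤ f x / ((y - z)/(x - z)) ^ k + f z / ((x - y)/(x - z)) ^ k := by
  have h1 : (0:ℝ) < y - z := by linarith
  have h2 : (0:ℝ) < x - y := by linarith
  have h3 : (0:ℝ) < x - z := by linarith
  have e1 : signPow k (x - y) = (x-y)^k := signPow_of_pos _ _ h2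
  have e2 : signPow k (x - z) = (x-z)^k := signPow_of_pos _ _ h3
  have e3 : signPow k (y - z) = (y-z)^k := signPow_of_pos _ _ h1
  have e4 : signPow k (y - x) = -((x-y)^k) := by
    rw [signPow_of_neg _ _ (by linarith : y - x < 0), neg_sub]
  have e5 : signPow k (z - x) = -((x-z)^k) := by
    rw [signPow_of_neg _ _ (by linarith : z - x < 0), neg_sub]
  have e6 : signPow k (z - y) = -((y-z)^k) := by
    rw [signPow_of_neg _ _ (by linarith : z - y < 0), neg_sub]
  rw [e1, e2, e3, e4, e5, e6]
  have key := strict_iff k (f x) (f y) (f z) (y - z) (x - y) h1 h2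
  rw [show (y - z) + (x - y) = x - z by ring] at key
  rw [show f x * (x-y)^k * (x-z)^k + f y * (y-z)^k * -((x-y)^k)
        + f z * -((x-z)^k) * -((y-z)^k)
      = f x * (x-y)^k * (x-z)^k - f y * ((y-z)^k * (x-y)^k)
        + f z * ((x-z)^k * (y-z)^k) by ring]
  rw [key, Real.div_rpow h1.le h3.le, Real.div_rpow h2.le h3.le,
    div_div_eq_mul_div, div_div_eq_mul_div, mul_div_assoc, mul_div_assoc]

lemma fwd_aux (k : ℝ) (f : ℝ → ℝ)
    (hA : ∀ x y z : ℝ, z ≤ y → y ≤ x →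
        0 ≤ f x * signPow k (x - y) * signPow k (x - z)
          + f y * signPow k (y - z) * signPow k (y - x)
          + f z * signPow k (z - x) * signPow k (z - y))
    (l x z : ℝ) (hl0 : 0 < l) (hl1 : l < 1) (hzx : z < x) :
    f (l * x + (1 - l) * z) ≤ f x / l ^ k + f z / (1 - l) ^ k := by
  set y := l * x + (1 - l) * z with hy
  have hd : 0 < x - z := by linarith
  have hzy : z < y := by nlinarith [mul_pos hl0 hd]
  have hyx : y < x := by nlinarith [mul_pos (by linarith : (0:ℝ) < 1 - l) hd]
  have h := (bridge k f x y z hzy hyx).1 (hA x y z hzy.le hyx.le)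
  have hne : x - z ≠ 0 := ne_of_gt hd
  have hl : (y - z)/(x - z) = l := by rw [div_eq_iff hne, hy]; ring
  have hr : (x - y)/(x - z) = 1 - l := by rw [div_eq_iff hne, hy]; ring
  rwa [hl, hr] at h

lemma exists_right (k : ℝ) (hk : 0 ≤ k) (f : ℝ → ℝ)
    (hB : ∀ l x z : ℝ, 0 < l → l < 1 → x ≠ z →
        f (l * x + (1 - l) * z) ≤ f x / l ^ k + f z / (1 - l) ^ k)
    (q : ℝ) (hq : f q < 0) : ∃ b, q < b ∧ f b ≤ f q := by
  rcases eq_or_lt_of_le hk with hk0 | hk0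
  · -- k = 0
    subst hk0
    have step : ∀ u, q < u → f ((q+u)/2) ≤ f q + f u := by
      intro u hu
      have h := hB (1/2) q u (by norm_num) (by norm_num) (by intro h; linarith)
      rw [show (1:ℝ)/2 * q + (1 - 1/2) * u = (q+u)/2 by ring] at h
      simpa [Real.rpow_zero] using h
    have H : ∀ n : ℕ, ∃ b, q < b ∧ f b ≤ f (q+1) + (n+1) * f q := by
      intro n
      induction n with
      | zero =>
        refine ⟨(q+(q+1))/2, by linarith, ?_⟩
        have := step (q+1) (by linarith)
        push_cast
        linarith
      | succ m ih =>
        obtain ⟨b, hb1, hb2⟩ := ih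
        refine ⟨(q+b)/2, by linarith, ?_⟩
        have := step b hb1
        push_cast

        linarith
    obtain ⟨n, hn⟩ := exists_nat_gt (f (q+1) / (-f q))
    have hn' : f (q+1) < n * (-f q) := by
      rw [div_lt_iff₀ (by linarith)] at hn
      linarith
    obtain ⟨b, hb1, hb2⟩ := H n
    exact ⟨b, hb1, by nlinarith⟩
  · -- k > 0
    set c := -f q with hc
    have hc0 : 0 < c := by simp [hc]; linarith
    set M := max (f (q+1)) 0 * (2:ℝ)^k with hM
    have h2k : (0:ℝ) < (2:ℝ)^k := Real.rpow_pos_of_pos (by norm_num) k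
    have hM0 : 0 ≤ M := mul_nonneg (le_max_right _ _) h2k.le
    have h12 : ((1:ℝ)/2)^k < 1 := Real.rpow_lt_one (by norm_num) (by norm_num) hk0
    have h12p : (0:ℝ) < ((1:ℝ)/2)^k := Real.rpow_pos_of_pos (by norm_num) k
    obtain ⟨n, hn⟩ := exists_pow_lt_of_lt_one
      (show (0:ℝ) < c / (c + M) from div_pos hc0 (by linarith)) h12
    set l := ((1:ℝ)/2)^(n+1) with hl
    have hl0 : 0 < l := by positivity
    have hl2 : l ≤ 1/2 := by
      rw [hl]
      calc ((1:ℝ)/2)^(n+1) ≤ ((1:ℝ)/2)^1 :=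
            pow_le_pow_of_le_one (by norm_num) (by norm_num) (by omega)
        _ = 1/2 := pow_one _
    have hl1 : l < 1 := by linarith
    have hlk : l ^ k < c / (c + M) := by
      have e : l ^ k = (((1:ℝ)/2)^k)^(n+1) := by
        rw [hl, ← Real.rpow_natCast ((1:ℝ)/2) (n+1), ← Real.rpow_natCast (((1:ℝ)/2)^k) (n+1),
          ← Real.rpow_mul (by norm_num), ← Real.rpow_mul (by norm_num)]
        ring_nf
      rw [e]
      calc (((1:ℝ)/2)^k)^(n+1) ≤ (((1:ℝ)/2)^k)^n :=
            pow_le_pow_of_le_one h12p.le h12.le (by omega)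
        _ < c / (c + M) := hn
    have hlkp : 0 < l ^ k := Real.rpow_pos_of_pos hl0 k
    have hb := hB l q (q+1) hl0 hl1 (by intro h; linarith)
    have bound1 : f q / l ^ k ≤ -(c + M) := by
      have hcM : (0:ℝ) < c + M := by linarith
      have h1 : l ^ k * (c + M) < c := by
        have h2 : l ^ k * (c + M) < (c / (c + M)) * (c + M) := by nlinarith
        rwa [div_mul_cancel₀ _ (ne_of_gt hcM)] at h2
      rw [div_le_iff₀ hlkp, show f q = -c from by rw [hc]; ring]
      nlinarith
    have bound2 : f (q+1) / (1 - l) ^ k ≤ M := by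
      have h1lp : (0:ℝ) < (1 - l)^k := Real.rpow_pos_of_pos (by linarith) k
      rcases le_or_gt (f (q+1)) 0 with hf1 | hf1
      · exact le_trans (div_nonpos_of_nonpos_of_nonneg hf1 h1lp.le) hM0
      · have hge : ((1:ℝ)/2)^k ≤ (1 - l)^k :=
          Real.rpow_le_rpow (by norm_num) (by linarith) hk
        have step1 : f (q+1) / (1 - l)^k ≤ f (q+1) / ((1:ℝ)/2)^k :=
          div_le_div_of_nonneg_left hf1.le h12p hge
        have e : f (q+1) / ((1:ℝ)/2)^k = f (q+1) * (2:ℝ)^k := by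
          rw [show ((1:ℝ)/2) = (2:ℝ)⁻¹ by norm_num, Real.inv_rpow (by norm_num), div_eq_mul_inv, inv_inv]
        rw [e] at step1
        have : f (q+1) * (2:ℝ)^k ≤ M := by
          rw [hM]
          exact mul_le_mul_of_nonneg_right (le_max_left _ _) h2k.le
        linarith
    refine ⟨l * q + (1 - l) * (q+1), by nlinarith, ?_⟩
    have : f q = -c := by rw [hc]; ring
    calc f (l * q + (1 - l) * (q+1)) ≤ f q / l^k + f (q+1) / (1-l)^k := hb
      _ ≤ -(c + M) + M := by linarith
      _ = f q := by rw [this]; ring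

lemma nonneg_of_B (k : ℝ) (hk : 0 ≤ k) (f : ℝ → ℝ)
    (hB : ∀ l x z : ℝ, 0 < l → l < 1 → x ≠ z →
        f (l * x + (1 - l) * z) ≤ f x / l ^ k + f z / (1 - l) ^ k)
    (q : ℝ) : 0 ≤ f q := by
  by_contra h
  push_neg at h
  obtain ⟨b, hqb, hfb⟩ := exists_right k hk f hB q h
  have hB' : ∀ l x z : ℝ, 0 < l → l < 1 → x ≠ z →
      (fun t => f (-t)) (l * x + (1 - l) * z) ≤
        (fun t => f (-t)) x / l ^ k + (fun t => f (-t)) z / (1 - l) ^ k := by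
    intro l x z hl0 hl1 hxz
    have := hB l (-x) (-z) hl0 hl1 (fun hcon => hxz (by linarith [neg_injective hcon]))
    rw [show l * -x + (1 - l) * -z = -(l * x + (1 - l) * z) by ring] at this
    exact this
  obtain ⟨a', ha', hfa'⟩ := exists_right k hk (fun t => f (-t)) hB' (-q) (by simpa using h)
  set a := -a' with ha
  have haq : a < q := by rw [ha]; linarith
  have hfa : f a ≤ f q := by simpa [ha] using hfa'
  set μ := (b - q)/(b - a) with hμ
  have hba : 0 < b - a := by linarith
  have hμ0 : 0 < μ := div_pos (by linarith) hba
  have hμ1 : μ < 1 := (div_lt_one hba).2 (by linarith)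
  have h2 := hB μ a b hμ0 hμ1 (ne_of_lt (by linarith))
  have hq' : μ * a + (1 - μ) * b = q := by
    rw [hμ]; field_simp; ring
  rw [hq'] at h2
  have hμk : μ^k ≤ 1 := Real.rpow_le_one hμ0.le hμ1.le hk
  have hμk0 : 0 < μ^k := Real.rpow_pos_of_pos hμ0 k
  have hνk : (1-μ)^k ≤ 1 := Real.rpow_le_one (by linarith) (by linarith) hk
  have hνk0 : 0 < (1-μ)^k := Real.rpow_pos_of_pos (by linarith) k
  have e1 : f a / μ^k ≤ f a := by
    rw [div_le_iff₀ hμk0]; nlinarith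
  have e2 : f b / (1-μ)^k ≤ f b := by
    rw [div_le_iff₀ hνk0]; nlinarith
  linarith

theorem stmt_12 (k : ℝ) (hk : 0 ≤ k) (f : ℝ → ℝ) :
    (∀ x y z : ℝ, z ≤ y → y ≤ x →
        0 ≤ f x * signPow k (x - y) * signPow k (x - z)
          + f y * signPow k (y - z) * signPow k (y - x)
          + f z * signPow k (z - x) * signPow k (z - y)) ↔
    (∀ (l x z : ℝ), 0 < l → l < 1 → x ≠ z →
        f (l * x + (1 - l) * z) ≤ f x / l ^ k + f z / (1 - l) ^ k) := by
  constructor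
  · intro hA l x z hl0 hl1 hxz
    rcases lt_or_gt_of_ne hxz with hlt | hgt
    · have := fwd_aux k f hA (1-l) z x (by linarith) (by linarith) hlt
      rw [show (1-l)*z + (1-(1-l))*x = l*x + (1-l)*z by ring,
        show (1:ℝ)-(1-l) = l by ring] at this
      linarith
    · exact fwd_aux k f hA l x z hl0 hl1 hgt
  · intro hB x y z hzy hyx
    have hf := nonneg_of_B k hk f hB
    rcases eq_or_lt_of_le hzy with h1 | h1
    · subst h1
      rcases eq_or_lt_of_le hyx with h2 | h2
      · subst h2
        simp [sub_self, signPow_zero']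
      · -- z = y < x
        have hx : 0 < x - z := by linarith
        simp only [sub_self, signPow_zero', mul_zero, zero_mul, add_zero, zero_add]
        rw [signPow_of_pos _ _ hx]
        have := mul_nonneg (mul_nonneg (hf x) (Real.rpow_nonneg hx.le k)) (Real.rpow_nonneg hx.le k)
        nlinarith [this]
    · rcases eq_or_lt_of_le hyx with h2 | h2
      · subst h2
        have hx : z - y < 0 := by linarith
        simp only [sub_self, signPow_zero', mul_zero, zero_mul, add_zero, zero_add]
        rw [signPow_of_neg _ _ hx, neg_sub]
        have := mul_nonneg (mul_nonneg (hf z) (Real.rpow_nonneg (by linarith : (0:ℝ) ≤ y - z) k))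
          (Real.rpow_nonneg (by linarith : (0:ℝ) ≤ y - z) k)
        nlinarith [this]
      · rw [bridge k f x y z h1 h2]
        have h3 : 0 < x - z := by linarith
        have hl0 : 0 < (y-z)/(x-z) := div_pos (by linarith) h3
        have hl1 : (y-z)/(x-z) < 1 := (div_lt_one h3).2 (by linarith)
        have h := hB ((y-z)/(x-z)) x z hl0 hl1 (ne_of_gt (by linarith))
        have harg : (y-z)/(x-z)*x + (1-(y-z)/(x-z))*z = y := by
          field_simp; ring
        have h1l : 1 - (y-z)/(x-z) = (x-y)/(x-z) := by
          field_simp; ring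
        rw [harg, h1l] at h
        exact h
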